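/- If F : ℝ^n → ℝ is Lipschitz with constant L₀, then its Gaussian smoothing F_μ satisfies |F_μ(x) − F(x)| ≤ μ L₀ √n for all x ∈ ℝ^n. -/

import Mathlib

open MeasureTheory ProbabilityTheory

/-- The standard Gaussian measure N(0, Iₙ) on ℝⁿ. -/
noncomputable def stdGaussian (n : ℕ) : Measure (Fin n → ℝ) :=
  Measure.pi fun _ => gaussianReal 0 1

/-- The Gaussian smoothing F_μ(x) = E_{u ∼ N(0,I)}[F(x + μ u)]. -/
noncomputable def gaussSmooth {n : ℕ} (F : (Fin n → ℝ) → ℝ) (μ : ℝ) (x : Fin n → ℝ) : ℝ :=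
  ∫ u, F (x + μ • u) ∂(stdGaussian n)

/-- The Euclidean norm on ℝⁿ. -/
noncomputable def euclNorm {n : ℕ} (x : Fin n → ℝ) : ℝ :=
  Real.sqrt (∑ i, (x i)^2)

section Aux
open Real Filter Set Topology
open scoped ENNReal NNReal


lemma hInt0 : Integrable (fun x : ℝ => Real.exp (-2⁻¹ * x^2)) := integrable_exp_neg_mul_sq (by norm_num)

lemma hInt2 : Integrable (fun x : ℝ => x^2 * Real.exp (-2⁻¹ * x^2)) := by
  have h := integrable_rpow_mul_exp_neg_mul_sq (b := 2⁻¹) (by norm_num) (s := 2) (by norm_num)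
  have : ∀ x : ℝ, x ^ (2:ℝ) = x ^ (2:ℕ) := fun x => by
    rw [show (2:ℝ) = ((2:ℕ):ℝ) by norm_num, Real.rpow_natCast]
  simpa [this] using h

lemma key_Ioi : ∫ x in Ioi (0:ℝ), (x^2 - 1) * Real.exp (-2⁻¹ * x^2) = 0 := by
  have hderiv : ∀ x ∈ Ici (0:ℝ), HasDerivAt (fun y : ℝ => -y * Real.exp (-2⁻¹ * y^2))
      ((x^2 - 1) * Real.exp (-2⁻¹ * x^2)) x := by
    intro x _
    have h1 : HasDerivAt (fun y : ℝ => -2⁻¹ * y^2) (-x) x := by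
      simpa using ((hasDerivAt_pow 2 x).const_mul (-2⁻¹ : ℝ))
    have h2 := h1.exp
    have h3 := ((hasDerivAt_id x).neg).mul h2
    have h4 : HasDerivAt (fun y : ℝ => -y * Real.exp (-2⁻¹ * y^2))
        (-1 * Real.exp (-2⁻¹ * x^2) + (-id) x * (Real.exp (-2⁻¹ * x^2) * -x)) x := h3
    convert h4 using 1
    simp only [Pi.neg_apply, id_eq]
    ring
  have f'int : IntegrableOn (fun x : ℝ => (x^2 - 1) * Real.exp (-2⁻¹ * x^2)) (Ioi 0) := by
    have : Integrable (fun x : ℝ => (x^2 - 1) * Real.exp (-2⁻¹ * x^2)) := by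
      simpa [sub_mul] using (hInt2.sub hInt0 : Integrable (fun x : ℝ => x^2 * Real.exp (-2⁻¹ * x^2) - Real.exp (-2⁻¹ * x^2)))
    exact this.integrableOn
  have htend : Tendsto (fun x : ℝ => -x * Real.exp (-2⁻¹ * x^2)) atTop (𝓝 0) := by
    have h := rpow_mul_exp_neg_mul_sq_isLittleO_exp_neg (b := 2⁻¹) (by norm_num) 1
    have h2 : Tendsto (fun x : ℝ => x ^ (1:ℝ) * Real.exp (-2⁻¹ * x^2)) atTop (𝓝 0) :=
      h.trans_tendsto (tendsto_exp_atBot.comp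
        (tendsto_id.const_mul_atTop_of_neg (by norm_num : (-(1/2):ℝ) < 0)))
    have h3 := h2.neg
    simp only [Real.rpow_one, neg_zero] at h3
    simpa [neg_mul] using h3
  have := integral_Ioi_of_hasDerivAt_of_tendsto' hderiv f'int htend
  simpa using this



lemma sq_exp_line : ∫ x : ℝ, x^2 * Real.exp (-2⁻¹ * x^2) = Real.sqrt (2 * π) := by
  have hIoi : ∫ x in Ioi (0:ℝ), x^2 * Real.exp (-2⁻¹ * x^2)
      = ∫ x in Ioi (0:ℝ), Real.exp (-2⁻¹ * x^2) := by
    have h := key_Ioi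
    rw [show (fun x : ℝ => (x^2 - 1) * Real.exp (-2⁻¹ * x^2))
        = fun x : ℝ => x^2 * Real.exp (-2⁻¹ * x^2) - Real.exp (-2⁻¹ * x^2) by
      funext x; ring] at h
    rw [integral_sub hInt2.integrableOn hInt0.integrableOn] at h
    linarith
  have h2 : ∫ x : ℝ, x^2 * Real.exp (-2⁻¹ * x^2)
      = 2 * ∫ x in Ioi (0:ℝ), x^2 * Real.exp (-2⁻¹ * x^2) := by
    have := integral_comp_abs (f := fun t : ℝ => t^2 * Real.exp (-2⁻¹ * t^2))
    simpa [sq_abs] using this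
  have h0 : ∫ x : ℝ, Real.exp (-2⁻¹ * x^2)
      = 2 * ∫ x in Ioi (0:ℝ), Real.exp (-2⁻¹ * x^2) := by
    have := integral_comp_abs (f := fun t : ℝ => Real.exp (-2⁻¹ * t^2))
    simpa [sq_abs] using this
  have hg : ∫ x : ℝ, Real.exp (-2⁻¹ * x^2) = Real.sqrt (2 * π) := by
    have := integral_gaussian (2⁻¹ : ℝ)
    rw [this]
    norm_num [mul_comm]
  rw [h2, hIoi, ← h0, hg]

lemma gaussianPDFReal_zero_one (x : ℝ) :
    gaussianPDFReal 0 1 x = (Real.sqrt (2 * π))⁻¹ * Real.exp (-2⁻¹ * x^2) := by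
  rw [gaussianPDFReal]
  push_cast
  congr 1
  · norm_num
  · congr 1
    ring

lemma gaussianReal_eq : gaussianReal 0 1
    = (volume : Measure ℝ).withDensity (fun x => ((gaussianPDFReal 0 1 x).toNNReal : ℝ≥0∞)) := by
  rw [gaussianReal_of_var_ne_zero 0 one_ne_zero]
  rfl

lemma meas_pdf : Measurable (fun x => (gaussianPDFReal 0 1 x).toNNReal) :=
  (measurable_gaussianPDFReal 0 1).real_toNNReal

lemma integrable_gaussianReal_iff {g : ℝ → ℝ} :
    Integrable g (gaussianReal 0 1) ↔ Integrable (fun x => gaussianPDFReal 0 1 x * g x) := by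
  rw [gaussianReal_eq, integrable_withDensity_iff_integrable_smul meas_pdf]
  constructor <;> intro h <;> refine h.congr (Eventually.of_forall fun x => ?_) <;>
    simp [NNReal.smul_def, Real.coe_toNNReal _ (gaussianPDFReal_nonneg 0 1 x)]

lemma integral_gaussianReal_eq (g : ℝ → ℝ) :
    ∫ x, g x ∂(gaussianReal 0 1) = ∫ x, gaussianPDFReal 0 1 x * g x := by
  rw [gaussianReal_eq, integral_withDensity_eq_integral_smul meas_pdf]
  congr 1
  funext x
  simp [NNReal.smul_def, Real.coe_toNNReal _ (gaussianPDFReal_nonneg 0 1 x)]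

lemma sqrt_two_pi_pos : (0:ℝ) < Real.sqrt (2 * π) :=
  Real.sqrt_pos.mpr (by positivity)

lemma integrable_sq_gaussianReal : Integrable (fun x : ℝ => x^2) (gaussianReal 0 1) := by
  rw [integrable_gaussianReal_iff]
  have := hInt2.const_mul (Real.sqrt (2 * π))⁻¹
  refine this.congr (Eventually.of_forall fun x => ?_)
  simp only [gaussianPDFReal_zero_one]
  ring

lemma integral_sq_gaussianReal : ∫ x, x^2 ∂(gaussianReal 0 1) = 1 := by
  rw [integral_gaussianReal_eq]
  have : (fun x : ℝ => gaussianPDFReal 0 1 x * x^2)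
      = fun x : ℝ => (Real.sqrt (2 * π))⁻¹ * (x^2 * Real.exp (-2⁻¹ * x^2)) := by
    funext x; rw [gaussianPDFReal_zero_one]; ring
  rw [this, integral_const_mul, sq_exp_line, inv_mul_cancel₀ sqrt_two_pi_pos.ne']

lemma integrable_abs_gaussianReal : Integrable (fun x : ℝ => |x|) (gaussianReal 0 1) := by
  rw [integrable_gaussianReal_iff]
  have hb : Integrable (fun x : ℝ =>
      (Real.sqrt (2 * π))⁻¹ * (x^2 * Real.exp (-2⁻¹ * x^2) + Real.exp (-2⁻¹ * x^2))) :=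
    (hInt2.add hInt0).const_mul _
  refine hb.mono' ?_ (Eventually.of_forall fun x => ?_)
  · exact ((measurable_gaussianPDFReal 0 1).mul measurable_abs).aestronglyMeasurable
  · rw [Real.norm_eq_abs, gaussianPDFReal_zero_one, abs_mul, abs_mul, abs_abs,
      abs_of_nonneg (Real.exp_pos _).le,
      abs_of_nonneg (inv_nonneg.mpr (Real.sqrt_nonneg _))]
    have h1 : |x| ≤ x^2 + 1 := by nlinarith [abs_nonneg x, sq_abs x]
    have h2 : (0:ℝ) < Real.exp (-2⁻¹ * x^2) := Real.exp_pos _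
    have h3 : (0:ℝ) ≤ (Real.sqrt (2 * π))⁻¹ := inv_nonneg.mpr (Real.sqrt_nonneg _)
    calc (Real.sqrt (2 * π))⁻¹ * Real.exp (-2⁻¹ * x^2) * |x|
        ≤ (Real.sqrt (2 * π))⁻¹ * Real.exp (-2⁻¹ * x^2) * (x^2 + 1) := by
          apply mul_le_mul_of_nonneg_left h1 (by positivity)
      _ = (Real.sqrt (2 * π))⁻¹ * (x^2 * Real.exp (-2⁻¹ * x^2) + Real.exp (-2⁻¹ * x^2)) := by ring
instance stdGaussian_prob (n : ℕ) : IsProbabilityMeasure (stdGaussian n) := by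
  unfold _root_.stdGaussian; infer_instance

lemma stdGaussian_map_eval {n : ℕ} (i : Fin n) :
    (stdGaussian n).map (fun u => u i) = gaussianReal 0 1 := by
  ext s hs
  rw [Measure.map_apply (measurable_pi_apply i) hs]
  have hpre : (fun u : Fin n → ℝ => u i) ⁻¹' s
      = Set.pi Set.univ (Function.update (fun _ => Set.univ) i s) := Set.eval_preimage
  rw [_root_.stdGaussian, hpre, Measure.pi_pi]
  rw [Finset.prod_eq_single i (fun j _ hj => by simp [Function.update_apply, hj])
    (fun h => absurd (Finset.mem_univ i) h)]
  simp

lemma integrable_eval_comp {n : ℕ} {g : ℝ → ℝ} (hg : Measurable g)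
    (hgi : Integrable g (gaussianReal 0 1)) (i : Fin n) :
    Integrable (fun u : Fin n → ℝ => g (u i)) (stdGaussian n) := by
  rw [← stdGaussian_map_eval i] at hgi
  exact (integrable_map_measure hg.aestronglyMeasurable
    (measurable_pi_apply i).aemeasurable).mp hgi

lemma integral_eval_comp {n : ℕ} {g : ℝ → ℝ} (hg : Measurable g) (i : Fin n) :
    ∫ u, g (u i) ∂(stdGaussian n) = ∫ x, g x ∂(gaussianReal 0 1) := by
  rw [← stdGaussian_map_eval i,
    integral_map (measurable_pi_apply i).aemeasurable hg.aestronglyMeasurable]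

lemma euclNorm_nonneg {n : ℕ} (u : Fin n → ℝ) : 0 ≤ euclNorm u := Real.sqrt_nonneg _

lemma euclNorm_sq {n : ℕ} (u : Fin n → ℝ) : (euclNorm u)^2 = ∑ i, (u i)^2 :=
  Real.sq_sqrt (Finset.sum_nonneg fun i _ => sq_nonneg _)

lemma euclNorm_smul {n : ℕ} (c : ℝ) (u : Fin n → ℝ) :
    euclNorm (c • u) = |c| * euclNorm u := by
  unfold euclNorm
  rw [← Real.sqrt_sq_eq_abs, ← Real.sqrt_mul (sq_nonneg c), Finset.mul_sum]
  congr 1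
  refine Finset.sum_congr rfl fun i _ => ?_
  simp [Pi.smul_apply, smul_eq_mul]
  ring

lemma euclNorm_continuous {n : ℕ} : Continuous (euclNorm (n := n)) := by
  unfold euclNorm
  exact Real.continuous_sqrt.comp
    (continuous_finset_sum _ fun i _ => (continuous_apply i).pow 2)

end Aux

open Real Filter Set Topology in
/-- if F is L₀-Lipschitz (Euclidean norm), its Gaussian smoothing
satisfies |F_μ(x) − F(x)| ≤ μ L₀ √n. -/
theorem stmt10 {n : ℕ} (F : (Fin n → ℝ) → ℝ) (L₀ : ℝ) (hL₀ : 0 < L₀)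
    (hLip : ∀ x y : Fin n → ℝ, |F x - F y| ≤ L₀ * euclNorm (x - y))
    (μ : ℝ) (hμ : 0 < μ) (x : Fin n → ℝ) :
    |gaussSmooth F μ x - F x| ≤ μ * L₀ * Real.sqrt n := by
  set γ := stdGaussian n with hγ
  have hFc : Continuous F := by
    rw [continuous_iff_continuousAt]
    intro y
    rw [ContinuousAt, tendsto_iff_dist_tendsto_zero]
    have hb : Tendsto (fun z => L₀ * euclNorm (z - y)) (nhds y)
        (nhds (L₀ * euclNorm (y - y))) :=
      tendsto_const_nhds.mul
        ((euclNorm_continuous.comp (continuous_id.sub continuous_const)).tendsto y)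
    have h0 : euclNorm (0 : Fin n → ℝ) = (0:ℝ) := by simp [euclNorm]
    refine squeeze_zero (g := fun z => L₀ * euclNorm (z - y)) (fun z => dist_nonneg) (fun z => ?_) ?_
    · rw [Real.dist_eq]; exact hLip z y
    · simpa [h0] using hb
  have hInt_sq : ∀ i : Fin n, Integrable (fun u : Fin n → ℝ => (u i)^2) γ :=
    fun i => integrable_eval_comp (g := fun t => t^2) (measurable_id.pow_const 2) integrable_sq_gaussianReal i
  have hsumsq : Integrable (fun u : Fin n → ℝ => ∑ i, (u i)^2) γ :=
    integrable_finset_sum _ (fun i _ => hInt_sq i)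
  have hNormMeas : AEStronglyMeasurable (euclNorm (n := n)) γ :=
    euclNorm_continuous.aestronglyMeasurable
  have hNormInt : Integrable (euclNorm (n := n)) γ := by
    refine (hsumsq.add (integrable_const 1)).mono' hNormMeas
      (Eventually.of_forall fun u => ?_)
    rw [Real.norm_eq_abs, abs_of_nonneg (euclNorm_nonneg u)]
    have hsq := euclNorm_sq u
    have h0 := euclNorm_nonneg u
    rcases le_total (euclNorm u) 1 with h | h
    · have h1 : (0:ℝ) ≤ ∑ i, (u i)^2 := by rw [← hsq]; positivity
      simp only [Pi.add_apply]
      linarith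
    · simp only [Pi.add_apply]
      nlinarith
  have hsq_int : ∫ u, (euclNorm u)^2 ∂γ = (n : ℝ) := by
    simp_rw [euclNorm_sq]
    rw [integral_finset_sum _ (fun i _ => hInt_sq i)]
    have : ∀ i : Fin n, ∫ u, (u i)^2 ∂γ = 1 := fun i => by
      rw [hγ, integral_eval_comp (g := fun t => t^2) (measurable_id.pow_const 2) i, integral_sq_gaussianReal]
    simp [this]
  have hmem : MemLp (euclNorm (n := n)) 2 γ := by
    rw [memLp_two_iff_integrable_sq hNormMeas]
    exact hsumsq.congr (Eventually.of_forall fun u => (euclNorm_sq u).symm)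
  have hvar := variance_nonneg (euclNorm (n := n)) γ
  rw [variance_eq_sub hmem] at hvar
  simp only [Pi.pow_apply] at hvar
  have hE : ∫ u, euclNorm u ∂γ ≤ Real.sqrt n := by
    have h0 : 0 ≤ ∫ u, euclNorm u ∂γ := integral_nonneg euclNorm_nonneg
    nlinarith [Real.sq_sqrt (by positivity : (0:ℝ) ≤ (n:ℝ)), Real.sqrt_nonneg (n:ℝ)]
  have hFint : Integrable (fun u => F (x + μ • u)) γ := by
    refine ((hNormInt.const_mul (L₀ * μ)).add (integrable_const |F x|)).mono'
      ((hFc.comp (continuous_const.add (continuous_id.const_smul μ))).aestronglyMeasurable)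
      (Eventually.of_forall fun u => ?_)
    rw [Real.norm_eq_abs]
    have h1 := hLip (x + μ • u) x
    have h2 : (x + μ • u) - x = μ • u := by abel
    rw [h2, euclNorm_smul, abs_of_pos hμ] at h1
    have h3 : |F (x + μ • u)| ≤ |F (x + μ • u) - F x| + |F x| := by
      calc |F (x + μ • u)| = |(F (x + μ • u) - F x) + F x| := by ring_nf
        _ ≤ |F (x + μ • u) - F x| + |F x| := abs_add_le _ _
    simp only [Pi.add_apply]
    calc |F (x + μ • u)| ≤ L₀ * (μ * euclNorm u) + |F x| := by linarith
      _ = L₀ * μ * euclNorm u + |F x| := by ring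
  have hdiff : Integrable (fun u => F (x + μ • u) - F x) γ := hFint.sub (integrable_const _)
  have hkey : gaussSmooth F μ x - F x = ∫ u, (F (x + μ • u) - F x) ∂γ := by
    rw [integral_sub hFint (integrable_const _), integral_const, probReal_univ,
      one_smul]
    rfl
  rw [hkey]
  calc |∫ u, (F (x + μ • u) - F x) ∂γ| ≤ ∫ u, |F (x + μ • u) - F x| ∂γ := by
        simpa [Real.norm_eq_abs] using
          norm_integral_le_integral_norm (μ := γ) (fun u => F (x + μ • u) - F x)
    _ ≤ ∫ u, L₀ * μ * euclNorm u ∂γ := by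
        refine integral_mono hdiff.abs (hNormInt.const_mul _) fun u => ?_
        have h1 := hLip (x + μ • u) x
        have h2 : (x + μ • u) - x = μ • u := by abel
        rw [h2, euclNorm_smul, abs_of_pos hμ] at h1
        calc |F (x + μ • u) - F x| ≤ L₀ * (μ * euclNorm u) := h1
          _ = L₀ * μ * euclNorm u := by ring
    _ = L₀ * μ * ∫ u, euclNorm u ∂γ := integral_const_mul _ _
    _ ≤ L₀ * μ * Real.sqrt n := mul_le_mul_of_nonneg_left hE (by positivity)
    _ = μ * L₀ * Real.sqrt n := by ring
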